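/- Let X and Y be random variables on a probability space (Ω, μ) (μ a probability measure) taking values in finite types 𝒳 and 𝒴, let f : 𝒳 × 𝒴 → 𝒵₁ and g : 𝒳 × 𝒴 → 𝒵₂ (𝒵₁, 𝒵₂ finite types), and let W be a random variable taking values in Finset (𝒳 × 𝒴) such that almost surely: (a) (X, Y) ∈ W; (b) for all (x, y), (x, y') ∈ W, f(x, y) = f(x, y'); and (c) for all (x, y), (x', y) ∈ W, g(x, y) = g(x', y). Then H[f(X, Y) | (W, X)] = 0 and H[g(X, Y) | (W, Y)] = 0. -/
import Mathlib


open MeasureTheory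

/-- Shannon entropy of a random variable taking values in a finite type. -/
noncomputable def ent {Ω : Type*} [MeasurableSpace Ω] (μ : Measure Ω)
    {α : Type*} [Fintype α] (X : Ω → α) : ℝ :=
  ∑ a : α, Real.negMulLog ((μ (X ⁻¹' {a})).toReal)

/-- `condEnt μ X Y` is the conditional Shannon entropy `H[Y | X]`. -/
noncomputable def condEnt {Ω : Type*} [MeasurableSpace Ω] (μ : Measure Ω)
    {α β : Type*} [Fintype α] [Fintype β] (X : Ω → α) (Y : Ω → β) : ℝ :=
  ent μ (fun ω => (X ω, Y ω)) - ent μ X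

lemma condEnt_eq_zero_of_ae_func {Ω : Type*} [MeasurableSpace Ω] (μ : Measure Ω)
    {α β : Type*} [Fintype α] [Fintype β] (U : Ω → α) (Z : Ω → β) (φ : α → β)
    (h : ∀ᵐ ω ∂μ, Z ω = φ (U ω)) : condEnt μ U Z = 0 := by
  classical
  have key : ∀ a b, μ ((fun ω => (U ω, Z ω)) ⁻¹' {(a, b)}) =
      if b = φ a then μ (U ⁻¹' {a}) else 0 := by
    intro a b
    have hs : ((fun ω => (U ω, Z ω)) ⁻¹' {(a, b)} : Set Ω) =ᵐ[μ]
        ((fun ω => (U ω, φ (U ω))) ⁻¹' {(a, b)}) := by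
      filter_upwards [h] with ω hω
      show ((U ω, Z ω) ∈ ({(a, b)} : Set (α × β))) = ((U ω, φ (U ω)) ∈ ({(a, b)} : Set (α × β)))
      rw [hω]
    rw [measure_congr hs]
    by_cases hb : b = φ a
    · subst hb
      rw [if_pos rfl]
      congr 1
      ext ω
      simp only [Set.mem_preimage, Set.mem_singleton_iff, Prod.mk.injEq]
      constructor
      · rintro ⟨h1, _⟩; exact h1
      · intro h1; exact ⟨h1, by rw [h1]⟩
    · rw [if_neg hb]
      convert measure_empty (μ := μ)
      ext ω
      simp only [Set.mem_preimage, Set.mem_singleton_iff, Prod.mk.injEq, Set.mem_empty_iff_false,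
        iff_false, not_and]
      intro h1 h2
      exact hb (h2 ▸ h1 ▸ rfl)
  have hent : ent μ (fun ω => (U ω, Z ω)) = ent μ U := by
    unfold ent
    rw [Fintype.sum_prod_type]
    refine Finset.sum_congr rfl fun a _ => ?_
    have : ∀ b, Real.negMulLog ((μ ((fun ω => (U ω, Z ω)) ⁻¹' {(a, b)})).toReal) =
        if b = φ a then Real.negMulLog ((μ (U ⁻¹' {a})).toReal) else 0 := by
      intro b
      rw [key a b]
      split_ifs with hb <;> simp [Real.negMulLog_zero]
    simp only [this]
    simp
  unfold condEnt
  rw [hent, sub_self]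

/-- Lemma 5 (lemma2_rooks): if `W` is almost surely an independent set of the
`fg`-modified rook's graph containing `(X, Y)`, then
`H[f(X,Y) | (W, X)] = 0` and `H[g(X,Y) | (W, Y)] = 0`. -/
theorem independent_set_determines_functions
    {Ω : Type*} [MeasurableSpace Ω] (μ : Measure Ω) [IsProbabilityMeasure μ]
    {𝒳 𝒴 𝒵₁ 𝒵₂ : Type*} [Fintype 𝒳] [Fintype 𝒴] [Fintype 𝒵₁] [Fintype 𝒵₂]
    [DecidableEq 𝒳] [DecidableEq 𝒴]
    [MeasurableSpace 𝒳] [MeasurableSingletonClass 𝒳]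
    [MeasurableSpace 𝒴] [MeasurableSingletonClass 𝒴]
    [MeasurableSpace (Finset (𝒳 × 𝒴))] [MeasurableSingletonClass (Finset (𝒳 × 𝒴))]
    (X : Ω → 𝒳) (Y : Ω → 𝒴) (hX : Measurable X) (hY : Measurable Y)
    (f : 𝒳 × 𝒴 → 𝒵₁) (g : 𝒳 × 𝒴 → 𝒵₂)
    (W : Ω → Finset (𝒳 × 𝒴)) (hW : Measurable W)
    (ha : ∀ᵐ ω ∂μ, (X ω, Y ω) ∈ W ω)
    (hb : ∀ᵐ ω ∂μ, ∀ p ∈ W ω, ∀ q ∈ W ω, p.1 = q.1 → f p = f q)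
    (hc : ∀ᵐ ω ∂μ, ∀ p ∈ W ω, ∀ q ∈ W ω, p.2 = q.2 → g p = g q) :
    condEnt μ (fun ω => (W ω, X ω)) (fun ω => f (X ω, Y ω)) = 0 ∧
    condEnt μ (fun ω => (W ω, Y ω)) (fun ω => g (X ω, Y ω)) = 0 := by
  classical
  have hΩ : Nonempty Ω := by
    by_contra h
    rw [not_nonempty_iff] at h
    have h1 : (Set.univ : Set Ω) = ∅ := Set.univ_eq_empty_iff.mpr h
    have := measure_univ (μ := μ)
    rw [h1, measure_empty] at this
    exact zero_ne_one this
  have h𝒴 : Nonempty 𝒴 := ⟨Y (Classical.choice hΩ)⟩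
  have h𝒳 : Nonempty 𝒳 := ⟨X (Classical.choice hΩ)⟩
  constructor
  · refine condEnt_eq_zero_of_ae_func μ _ _
      (fun wx => if h : ∃ y, (wx.2, y) ∈ wx.1 then f (wx.2, h.choose) else
        f (wx.2, Classical.arbitrary 𝒴)) ?_
    filter_upwards [ha, hb] with ω hωa hωb
    have hex : ∃ y, ((X ω, Y ω).1, y) ∈ W ω := ⟨Y ω, hωa⟩
    simp only [dif_pos hex]
    exact (hωb (X ω, hex.choose) hex.choose_spec (X ω, Y ω) hωa rfl).symm
  · refine condEnt_eq_zero_of_ae_func μ _ _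
      (fun wy => if h : ∃ x, (x, wy.2) ∈ wy.1 then g (h.choose, wy.2) else
        g (Classical.arbitrary 𝒳, wy.2)) ?_
    filter_upwards [ha, hc] with ω hωa hωc
    have hex : ∃ x, (x, (X ω, Y ω).2) ∈ W ω := ⟨X ω, hωa⟩
    simp only [dif_pos hex]
    exact (hωc (hex.choose, Y ω) hex.choose_spec (X ω, Y ω) hωa rfl).symm
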